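/- arXiv:0812.4829 — 3 statements merged into one kernel-verified Lean document; each statement's English description precedes it below -/
import Mathlib

section
/- Let w be a complex number with positive imaginary part, and let z₄, z₅ be the two roots of the quadratic z² − (2/3)w·z − 1/3 = 0. Then both z₄ and z₅ lie in the open upper half-plane, and the sum of their arguments equals π (equivalently, z₄·z₅ = −1/3 is a negative real number and Im z₄ > 0, Im z₅ > 0). -/
open Complex

/-- If `w` is in the open upper half-plane and `z₄, z₅` are the two roots of
`z² - (2/3)w z - 1/3` (so `z₄ + z₅ = (2/3)w` and `z₄ z₅ = -1/3`), then both roots lie in the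
open upper half-plane and the sum of their arguments is `π`. -/
theorem stmt_8 (w z₄ z₅ : ℂ) (hw : 0 < w.im)
    (h4 : z₄ ^ 2 - (2/3) * w * z₄ - 1/3 = 0)
    (h5 : z₅ ^ 2 - (2/3) * w * z₅ - 1/3 = 0)
    (hsum : z₄ + z₅ = (2/3) * w) (hprod : z₄ * z₅ = -1/3) :
    0 < z₄.im ∧ 0 < z₅.im ∧ z₄.arg + z₅.arg = Real.pi := by
  have hz4 : z₄ ≠ 0 := by
    rintro rfl
    simp at hprod
    norm_num at hprod
  have hz5 : z₅ ≠ 0 := by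
    rintro rfl
    simp at hprod
    norm_num at hprod
  have hN : 0 < Complex.normSq z₄ := Complex.normSq_pos.mpr hz4
  have hz5eq : z₅ = (-1/3 : ℂ) * z₄⁻¹ := by
    calc z₅ = z₄⁻¹ * (z₄ * z₅) := by rw [← mul_assoc, inv_mul_cancel₀ hz4, one_mul]
    _ = (-1/3 : ℂ) * z₄⁻¹ := by rw [hprod]; ring
  have him5 : z₅.im = z₄.im / (3 * Complex.normSq z₄) := by
    rw [hz5eq]
    simp only [Complex.mul_im, Complex.inv_im, Complex.inv_re]
    norm_num
    ring
  have hsumim : z₄.im + z₅.im = (2/3) * w.im := by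
    have := congrArg Complex.im hsum
    simpa [Complex.add_im, Complex.mul_im] using this
  have h4pos : 0 < z₄.im := by
    by_contra h
    push_neg at h
    have h5le : z₅.im ≤ 0 := by
      rw [him5]
      exact div_nonpos_of_nonpos_of_nonneg h (by positivity)
    nlinarith
  have h5pos : 0 < z₅.im := by
    rw [him5]; positivity
  refine ⟨h4pos, h5pos, ?_⟩
  have ha4 : z₄.arg ∈ Set.Ioo 0 Real.pi := by
    constructor
    · refine lt_of_le_of_ne (Complex.arg_nonneg_iff.mpr h4pos.le) fun h => ?_
      exact absurd (Complex.arg_eq_zero_iff.mp h.symm).2 (ne_of_gt h4pos)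
    · exact Complex.arg_lt_pi_iff.mpr (Or.inr (ne_of_gt h4pos))
  have ha5 : z₅.arg ∈ Set.Ioo 0 Real.pi := by
    constructor
    · refine lt_of_le_of_ne (Complex.arg_nonneg_iff.mpr h5pos.le) fun h => ?_
      exact absurd (Complex.arg_eq_zero_iff.mp h.symm).2 (ne_of_gt h5pos)
    · exact Complex.arg_lt_pi_iff.mpr (Or.inr (ne_of_gt h5pos))
  have hargprod : (z₄ * z₅).arg = Real.pi := by
    rw [hprod]
    have : (-1/3 : ℂ) = ((-1/3 : ℝ) : ℂ) := by norm_num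
    rw [this, Complex.arg_ofReal_of_neg (by norm_num)]
  have hangle : ((z₄ * z₅).arg : Real.Angle) = (z₄.arg : Real.Angle) + z₅.arg :=
    Complex.arg_mul_coe_angle hz4 hz5
  rw [hargprod] at hangle
  have : ((Real.pi : ℝ) : Real.Angle) = ((z₄.arg + z₅.arg : ℝ) : Real.Angle) := by
    rw [hangle, Real.Angle.coe_add]
  rw [Real.Angle.angle_eq_iff_two_pi_dvd_sub] at this
  obtain ⟨k, hk⟩ := this
  have hpi := Real.pi_pos
  have hk0 : (k : ℝ) = 0 := by
    obtain ⟨h1, h2⟩ := ha4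
    obtain ⟨h3, h4'⟩ := ha5
    by_contra hne
    have : (1:ℝ) ≤ |(k:ℝ)| := by
      have : k ≠ 0 := by exact_mod_cast fun h => hne (by rw [h]; norm_num)
      exact_mod_cast Int.one_le_abs (by exact_mod_cast this)
    rcases abs_cases (k:ℝ) with ⟨he, _⟩ | ⟨he, _⟩ <;> nlinarith
  rw [hk0] at hk
  linarith [hk]
end

section
/- Let w be a complex number with positive imaginary part, and let z₄, z₅ be the two roots of z² − (2/3)(1+w)z + w/3 = 0. Then both z₄ and z₅ lie in the open upper half-plane, and arg z₄ + arg z₅ = arg w (taking arguments in (0,π)). -/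
open Complex

lemma im_pos_of_root (w z : ℂ) (hw : 0 < w.im)
    (h : z ^ 2 - (2/3) * (1 + w) * z + w/3 = 0) : 0 < z.im := by
  rw [Complex.ext_iff] at h
  obtain ⟨hre, him⟩ := h
  simp only [pow_two, Complex.mul_re, Complex.mul_im, Complex.add_re, Complex.add_im,
    Complex.sub_re, Complex.sub_im, Complex.one_re, Complex.one_im, Complex.div_ofNat_re,
    Complex.div_ofNat_im, Complex.zero_re, Complex.zero_im, Complex.re_ofNat, Complex.im_ofNat] at hre him
  set a := z.re with ha
  set b := z.im with hb
  set u := w.re with hu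
  set v := w.im with hv
  -- div_re of 2/3 : ℂ ... check forms
  have key : v * ((1-2*a)^2 + (2*b)^2) = 2*b*(1 - 3*a + 3*(a^2+b^2)) := by
    linear_combination (3*(1-2*a)) * him + (6*b) * hre
  by_contra hle
  push_neg at hle
  have h1 : 2*b*(1 - 3*a + 3*(a^2+b^2)) ≤ 0 := by
    nlinarith [sq_nonneg (a-1/2), sq_nonneg b]
  have h2 : (0:ℝ) ≤ v * ((1-2*a)^2 + (2*b)^2) := by positivity
  have h3 : v * ((1-2*a)^2 + (2*b)^2) = 0 := le_antisymm (key ▸ h1) h2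
  have h4 : (1-2*a)^2 + (2*b)^2 = 0 := by
    rcases mul_eq_zero.1 h3 with h | h
    · exact absurd h (ne_of_gt hw)
    · exact h
  have hb0 : b = 0 := by nlinarith [sq_nonneg (1-2*a)]
  have ha2 : a = 1/2 := by nlinarith [sq_nonneg (2*b)]
  rw [ha2, hb0] at hre
  norm_num at hre
  linarith

/-- If `w` is in the open upper half-plane and `z₄, z₅` are the two roots of
`z² - (2/3)(1+w) z + w/3` (so `z₄ + z₅ = (2/3)(1+w)` and `z₄ z₅ = w/3`), then both roots lie
in the open upper half-plane and `arg z₄ + arg z₅ = arg w`. -/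
theorem stmt_9 (w z₄ z₅ : ℂ) (hw : 0 < w.im)
    (h4 : z₄ ^ 2 - (2/3) * (1 + w) * z₄ + w/3 = 0)
    (h5 : z₅ ^ 2 - (2/3) * (1 + w) * z₅ + w/3 = 0)
    (hsum : z₄ + z₅ = (2/3) * (1 + w)) (hprod : z₄ * z₅ = w/3) :
    0 < z₄.im ∧ 0 < z₅.im ∧ z₄.arg + z₅.arg = w.arg := by
  have h4i := im_pos_of_root w z₄ hw h4
  have h5i := im_pos_of_root w z₅ hw h5
  refine ⟨h4i, h5i, ?_⟩
  have hz4 : z₄ ≠ 0 := fun h => by simp [h] at h4i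
  have hz5 : z₅ ≠ 0 := fun h => by simp [h] at h5i
  have argpos : ∀ z : ℂ, 0 < z.im → 0 < z.arg ∧ z.arg < Real.pi := by
    intro z hz
    constructor
    · rcases (Complex.arg_nonneg_iff.mpr hz.le).lt_or_eq with h | h
      · exact h
      · exact absurd (Complex.arg_eq_zero_iff.mp h.symm).2 (by simp [hz.ne'])
    · exact Complex.arg_lt_pi_iff.mpr (Or.inr hz.ne')
  obtain ⟨p4, q4⟩ := argpos z₄ h4i
  obtain ⟨p5, q5⟩ := argpos z₅ h5i
  obtain ⟨pw, qw⟩ := argpos w hw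
  have hwz : w = (3:ℝ) * (z₄ * z₅) := by rw [hprod]; push_cast; ring
  have hargw : w.arg = (z₄ * z₅).arg := by rw [hwz, Complex.arg_real_mul _ (by norm_num)]
  have hangle : ((z₄ * z₅).arg : Real.Angle) = (z₄.arg + z₅.arg : ℝ) := by
    rw [Complex.arg_mul_coe_angle hz4 hz5, Real.Angle.coe_add]
  rw [Real.Angle.angle_eq_iff_two_pi_dvd_sub] at hangle
  obtain ⟨k, hk⟩ := hangle
  have hpi := Real.pi_pos
  have hk0 : k = 0 := by
    have hb1 : (-1:ℝ) < (k:ℝ) := by nlinarith [hk, hargw, pw, qw, p4, p5, q4, q5]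
    have hb2 : (k:ℝ) < 1 := by nlinarith [hk, hargw, pw, qw, p4, p5, q4, q5]
    have : -1 < k ∧ k < 1 := ⟨by exact_mod_cast hb1, by exact_mod_cast hb2⟩
    omega
  rw [hk0] at hk
  push_cast at hk
  rw [hargw]
  linarith [hk]
end

section
/- Let f, φ be complex polynomials with no common root, and suppose φ(z)+tᵢf(z) = (z−aᵢ)Qᵢ(z)² for four distinct tᵢ and distinct aᵢ. Then there exists a nonzero constant N such that Q₁(z)Q₂(z)Q₃(z)Q₄(z) = N·(φ′(z)f(z) − φ(z)f′(z)). -/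
open Polynomial

lemma copr_of_no_common_root {p q : ℂ[X]} (hp : p ≠ 0)
    (h : ∀ z, ¬(p.eval z = 0 ∧ q.eval z = 0)) : IsCoprime p q := by
  rw [← EuclideanDomain.gcd_isUnit_iff]
  by_contra hu
  have hg0 : EuclideanDomain.gcd p q ≠ 0 := by
    intro h0
    rw [EuclideanDomain.gcd_eq_zero_iff] at h0
    exact hp h0.1
  obtain ⟨z, hz⟩ := Complex.exists_root
    (degree_pos_of_ne_zero_of_nonunit hg0 hu)
  exact h z ⟨eval_eq_zero_of_dvd_of_eval_eq_zero (EuclideanDomain.gcd_dvd_left p q) hz,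
    eval_eq_zero_of_dvd_of_eval_eq_zero (EuclideanDomain.gcd_dvd_right p q) hz⟩

/-- If coprime `φ, f` (with `deg φ = n` odd, `deg f ≤ n-1`) satisfy
`φ + tᵢ f = (X - aᵢ) Qᵢ²` for four distinct `tᵢ` and distinct `aᵢ`, with `deg Qᵢ = (n-1)/2`,
then there is a nonzero constant `N` with `Q₁Q₂Q₃Q₄ = N (φ' f - φ f')`. -/
theorem stmt_13 (n : ℕ) (hn : Odd n) (φ f : Polynomial ℂ)
    (hφ : φ.natDegree = n) (hf : f.natDegree ≤ n - 1)
    (hcop : ∀ z : ℂ, ¬ (φ.eval z = 0 ∧ f.eval z = 0))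
    (t a : Fin 4 → ℂ) (ht : Function.Injective t) (ha : Function.Injective a)
    (Q : Fin 4 → Polynomial ℂ) (hQdeg : ∀ i, (Q i).natDegree = (n - 1) / 2)
    (hfac : ∀ i, φ + C (t i) * f = (X - C (a i)) * (Q i) ^ 2) :
    ∃ N : ℂ, N ≠ 0 ∧
      Q 0 * Q 1 * Q 2 * Q 3 =
        C N * (Polynomial.derivative φ * f - φ * Polynomial.derivative f) := by
  obtain ⟨m, hm⟩ := hn
  set W := derivative φ * f - φ * derivative f with hWdef
  have hQm : ∀ i, (Q i).natDegree = m := by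
    intro i; rw [hQdeg i]; omega
  have hφ0 : φ ≠ 0 := by
    intro h0; rw [h0, natDegree_zero] at hφ; omega
  -- each Q i is nonzero
  have hQ0 : ∀ i, Q i ≠ 0 := by
    intro i h0
    have h := hfac i
    rw [h0] at h
    have hφe : φ = -(C (t i) * f) := by linear_combination h
    have : φ.natDegree ≤ f.natDegree := by
      rw [hφe, natDegree_neg]
      exact (natDegree_mul_le).trans (by simp)
    omega
  -- f is nonzero
  have hf0 : f ≠ 0 := by
    intro h0
    have hdp : 0 < φ.degree := by
      rw [← natDegree_pos_iff_degree_pos]; omega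
    obtain ⟨z, hz⟩ := Complex.exists_root hdp
    exact hcop z ⟨hz, by simp [h0]⟩
  -- each Q i divides the Wronskian W
  have hdvd : ∀ i, Q i ∣ W := by
    intro i
    have h := hfac i
    have h' := congrArg derivative h
    simp only [derivative_add, derivative_mul, derivative_C, derivative_pow, derivative_sub,
      derivative_X, zero_mul, zero_add, one_mul, sub_zero, mul_one, Nat.cast_ofNat, map_ofNat,
      pow_one] at h'
    exact ⟨Q i * f + (X - C (a i)) * (2 * derivative (Q i) * f - Q i * derivative f), by
      rw [hWdef]; linear_combination f * h' - derivative f * h⟩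
  -- the Q i are pairwise coprime
  have hQcop : ∀ i j, t i ≠ t j → IsCoprime (Q i) (Q j) := by
    intro i j hij
    apply copr_of_no_common_root (hQ0 i)
    rintro z ⟨hzi, hzj⟩
    have h1 := congrArg (eval z) (hfac i)
    have h2 := congrArg (eval z) (hfac j)
    simp only [eval_add, eval_mul, eval_pow, eval_sub, eval_X, eval_C, hzi, hzj] at h1 h2
    have hfz : f.eval z = 0 := by
      have h3 : (t i - t j) * f.eval z = 0 := by
        linear_combination h1 - h2
      rcases mul_eq_zero.1 h3 with h | h
      · exact absurd (by linear_combination h) hij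
      · exact h
    have hφz : φ.eval z = 0 := by
      linear_combination h1 - t i * hfz
    exact hcop z ⟨hφz, hfz⟩
  have htne : ∀ i j : Fin 4, i ≠ j → t i ≠ t j := fun i j hij h => hij (ht h)
  -- W is nonzero
  have hWne : W ≠ 0 := by
    intro h0
    have hcopφf : IsCoprime φ f := copr_of_no_common_root hφ0 hcop
    have hdd : φ ∣ derivative φ := by
      have heq : derivative φ * f = φ * derivative f := by
        have := sub_eq_zero.1 h0; exact this
      exact hcopφf.dvd_of_dvd_mul_right ⟨derivative f, heq⟩
    have hφ' : derivative φ ≠ 0 := by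
      intro hd
      have := natDegree_eq_zero_of_derivative_eq_zero hd
      omega
    have h1 := natDegree_le_of_dvd hdd hφ'
    have h2 := natDegree_derivative_lt (p := φ) (by omega)
    omega
  -- the product divides W
  have hdvdP : Q 0 * Q 1 * Q 2 * Q 3 ∣ W := by
    have h01 := (hQcop 0 1 (htne 0 1 (by decide))).mul_dvd (hdvd 0) (hdvd 1)
    have c2 : IsCoprime (Q 0 * Q 1) (Q 2) :=
      (hQcop 0 2 (htne 0 2 (by decide))).mul_left (hQcop 1 2 (htne 1 2 (by decide)))
    have h012 := c2.mul_dvd h01 (hdvd 2)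
    have c3 : IsCoprime (Q 0 * Q 1 * Q 2) (Q 3) :=
      (((hQcop 0 3 (htne 0 3 (by decide))).mul_left
        (hQcop 1 3 (htne 1 3 (by decide)))).mul_left (hQcop 2 3 (htne 2 3 (by decide))))
    exact c3.mul_dvd h012 (hdvd 3)
  obtain ⟨k, hk⟩ := hdvdP
  have hk0 : k ≠ 0 := by
    intro h0; rw [h0, mul_zero] at hk; exact hWne hk
  have hP0 : Q 0 * Q 1 * Q 2 * Q 3 ≠ 0 :=
    mul_ne_zero (mul_ne_zero (mul_ne_zero (hQ0 0) (hQ0 1)) (hQ0 2)) (hQ0 3)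
  have hPdeg : (Q 0 * Q 1 * Q 2 * Q 3).natDegree = 4 * m := by
    rw [natDegree_mul (mul_ne_zero (mul_ne_zero (hQ0 0) (hQ0 1)) (hQ0 2)) (hQ0 3),
      natDegree_mul (mul_ne_zero (hQ0 0) (hQ0 1)) (hQ0 2),
      natDegree_mul (hQ0 0) (hQ0 1), hQm, hQm, hQm, hQm]
    ring
  -- degree bound on W
  have hWdeg : W.natDegree ≤ 4 * m := by
    have hd1 : (derivative φ * f).natDegree ≤ 4 * m := by
      refine natDegree_mul_le.trans ?_
      have := natDegree_derivative_le φ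
      omega
    have hd2 : (φ * derivative f).natDegree ≤ 4 * m := by
      by_cases hdf : derivative f = 0
      · simp [hdf]
      · refine natDegree_mul_le.trans ?_
        have h1 := natDegree_derivative_le f
        have h2 : f.natDegree ≠ 0 := by
          intro h0
          exact hdf (by rw [eq_C_of_natDegree_eq_zero h0]; simp)
        omega
    exact (natDegree_sub_le _ _).trans (by omega)
  have hkdeg : k.natDegree = 0 := by
    have := natDegree_mul hP0 hk0
    rw [← hk] at this
    omega
  obtain ⟨c, rfl⟩ : ∃ c, k = C c := ⟨k.coeff 0, eq_C_of_natDegree_eq_zero hkdeg⟩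
  have hc0 : c ≠ 0 := by
    intro h0; rw [h0, map_zero] at hk0; exact hk0 rfl
  refine ⟨c⁻¹, inv_ne_zero hc0, ?_⟩
  rw [hk,
    show C c⁻¹ * (Q 0 * Q 1 * Q 2 * Q 3 * C c) = Q 0 * Q 1 * Q 2 * Q 3 * (C c⁻¹ * C c) from by
      ring, ← C_mul, inv_mul_cancel₀ hc0, C_1, mul_one]
end
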